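/- Under the hypotheses of the previous statement, the function Ψ(λ) = (θ_1(λ) - θ_2(λ))/2 + π is a strictly increasing continuous bijection from [L, M] onto [0, π], where L = min f, M = max f and θ_1(λ) < θ_2(λ) are the two solutions of f(e^{iθ}) = λ (with θ_1(L)=0, θ_2(L)=2π and θ_1(M)=θ_2(M)=θ̃). -/

import Mathlib

open Real Set

/-- A strictly monotone function on `[a, b]` that is surjective onto
`[g a, g b]` is continuous on `[a, b]`. -/
lemma continuousOn_of_strictMonoOn_surjOn {g : ℝ → ℝ} {a b : ℝ} (hab : a ≤ b)
    (hm : StrictMonoOn g (Set.Icc a b))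
    (hs : Set.SurjOn g (Set.Icc a b) (Set.Icc (g a) (g b))) :
    ContinuousOn g (Set.Icc a b) := by
  intro x hx
  obtain ⟨hax, hxb⟩ := hx
  have hxmem : x ∈ Set.Icc a b := ⟨hax, hxb⟩
  have hamem : a ∈ Set.Icc a b := ⟨le_refl a, hab⟩
  have hbmem : b ∈ Set.Icc a b := ⟨hab, le_refl b⟩
  -- right continuity when x < b
  have crR : x < b → ContinuousWithinAt g (Set.Ici x) x := by
    intro hxb'
    have sR : Set.Icc a b ∈ nhdsWithin x (Set.Ici x) := by
      refine mem_nhdsWithin.2 ⟨Set.Iio b, isOpen_Iio, hxb', ?_⟩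
      rintro y ⟨hy1, hy2⟩
      exact ⟨hax.trans hy2, le_of_lt hy1⟩
    refine hm.continuousWithinAt_right_of_exists_between sR ?_
    intro y hy
    by_cases hyb : y ≤ g b
    · have hgay : g a ≤ y :=
        le_of_lt (lt_of_le_of_lt (hm.monotoneOn hamem hxmem hax) hy)
      obtain ⟨c, hc, hgc⟩ := hs ⟨hgay, hyb⟩
      exact ⟨c, hc, by rw [hgc]; exact ⟨hy, le_refl y⟩⟩
    · exact ⟨b, hbmem, hm hxmem hbmem hxb', le_of_not_ge hyb⟩
  -- left continuity when a < x
  have crL : a < x → ContinuousWithinAt g (Set.Iic x) x := by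
    intro hax'
    have sL : Set.Icc a b ∈ nhdsWithin x (Set.Iic x) := by
      refine mem_nhdsWithin.2 ⟨Set.Ioi a, isOpen_Ioi, hax', ?_⟩
      rintro y ⟨hy1, hy2⟩
      exact ⟨le_of_lt hy1, hy2.trans hxb⟩
    refine hm.continuousWithinAt_left_of_exists_between sL ?_
    intro y hy
    by_cases hya : g a ≤ y
    · have hyb : y ≤ g b :=
        le_of_lt (lt_of_lt_of_le hy (hm.monotoneOn hxmem hbmem hxb))
      obtain ⟨c, hc, hgc⟩ := hs ⟨hya, hyb⟩
      exact ⟨c, hc, by rw [hgc]; exact ⟨le_refl y, hy⟩⟩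
    · exact ⟨a, hamem, le_of_not_ge hya, hm hamem hxmem hax'⟩
  rcases eq_or_lt_of_le hax with rfl | hax'
  · rcases eq_or_lt_of_le hxb with rfl | hxb'
    · rw [Set.Icc_self]
      exact continuousWithinAt_singleton
    · exact (crR hxb').mono Set.Icc_subset_Ici_self
  · rcases eq_or_lt_of_le hxb with rfl | hxb'
    · exact (crL hax').mono Set.Icc_subset_Iic_self
    · have := (crL hax').union (crR hxb')
      refine this.mono ?_
      intro y _
      rcases le_total y x with h | h
      · exact Or.inl h
      · exact Or.inr h

/-- With `F` as in the previous statement, `L = F 0 = min F`, `M = F θ̃ = max F`,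
and `θ₁(λ) ≤ θ₂(λ)` the level-set endpoints (extended continuously with
`θ₁(L) = 0`, `θ₂(L) = 2π`, `θ₁(M) = θ₂(M) = θ̃`), the function
`Ψ(λ) = (θ₁(λ) - θ₂(λ))/2 + π` is a strictly increasing continuous bijection
from `[L, M]` onto `[0, π]`. -/
theorem psi_strictMono_bijOn (F : ℝ → ℝ) (θt : ℝ)
    (hθt : θt ∈ Set.Ioo 0 (2 * π))
    (hcont : ContinuousOn F (Set.Icc 0 (2 * π)))
    (hper : F 0 = F (2 * π))
    (hpos : ∀ θ, 0 < F θ)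
    (hinc : StrictMonoOn F (Set.Icc 0 θt))
    (hdec : StrictAntiOn F (Set.Icc θt (2 * π)))
    (t₁ t₂ : ℝ → ℝ)
    (ht₁ : ∀ lam ∈ Set.Ioo (F 0) (F θt), t₁ lam ∈ Set.Ioo 0 θt ∧ F (t₁ lam) = lam)
    (ht₂ : ∀ lam ∈ Set.Ioo (F 0) (F θt), t₂ lam ∈ Set.Ioo θt (2 * π) ∧ F (t₂ lam) = lam)
    (h1L : t₁ (F 0) = 0) (h2L : t₂ (F 0) = 2 * π)
    (h1M : t₁ (F θt) = θt) (h2M : t₂ (F θt) = θt) :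
    StrictMonoOn (fun lam => (t₁ lam - t₂ lam) / 2 + π) (Set.Icc (F 0) (F θt)) ∧
    ContinuousOn (fun lam => (t₁ lam - t₂ lam) / 2 + π) (Set.Icc (F 0) (F θt)) ∧
    Set.BijOn (fun lam => (t₁ lam - t₂ lam) / 2 + π)
      (Set.Icc (F 0) (F θt)) (Set.Icc 0 π) := by
  obtain ⟨hθt0, hθt2⟩ := hθt
  have h0mem : (0 : ℝ) ∈ Set.Icc 0 θt := ⟨le_refl 0, le_of_lt hθt0⟩
  have hθtmem : θt ∈ Set.Icc 0 θt := ⟨le_of_lt hθt0, le_refl θt⟩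
  have hθtmem' : θt ∈ Set.Icc θt (2 * π) := ⟨le_refl θt, le_of_lt hθt2⟩
  have h2πmem : (2 * π) ∈ Set.Icc θt (2 * π) := ⟨le_of_lt hθt2, le_refl _⟩
  have hLM : F 0 < F θt := hinc h0mem hθtmem hθt0
  have hLmem : F 0 ∈ Set.Icc (F 0) (F θt) := ⟨le_refl _, le_of_lt hLM⟩
  have hMmem : F θt ∈ Set.Icc (F 0) (F θt) := ⟨le_of_lt hLM, le_refl _⟩
  -- pointwise facts on the closed interval
  have ht₁' : ∀ lam ∈ Set.Icc (F 0) (F θt), t₁ lam ∈ Set.Icc 0 θt ∧ F (t₁ lam) = lam := by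
    intro lam hlam
    rcases eq_or_lt_of_le hlam.1 with h1 | h1
    · rw [← h1, h1L]; exact ⟨h0mem, rfl⟩
    · rcases eq_or_lt_of_le hlam.2 with h2 | h2
      · rw [h2, h1M]; exact ⟨hθtmem, rfl⟩
      · obtain ⟨hm, hF⟩ := ht₁ lam ⟨h1, h2⟩
        exact ⟨⟨le_of_lt hm.1, le_of_lt hm.2⟩, hF⟩
  have ht₂' : ∀ lam ∈ Set.Icc (F 0) (F θt),
      t₂ lam ∈ Set.Icc θt (2 * π) ∧ F (t₂ lam) = lam := by
    intro lam hlam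
    rcases eq_or_lt_of_le hlam.1 with h1 | h1
    · rw [← h1, h2L]; exact ⟨h2πmem, hper.symm⟩
    · rcases eq_or_lt_of_le hlam.2 with h2 | h2
      · rw [h2, h2M]; exact ⟨hθtmem', rfl⟩
      · obtain ⟨hm, hF⟩ := ht₂ lam ⟨h1, h2⟩
        exact ⟨⟨le_of_lt hm.1, le_of_lt hm.2⟩, hF⟩
  -- strict monotonicity of t₁, strict antitonicity of t₂
  have t₁mono : StrictMonoOn t₁ (Set.Icc (F 0) (F θt)) := by
    intro x hx y hy hxy
    obtain ⟨hx1, hx2⟩ := ht₁' x hx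
    obtain ⟨hy1, hy2⟩ := ht₁' y hy
    by_contra h
    push_neg at h
    have := hinc.monotoneOn hy1 hx1 h
    rw [hx2, hy2] at this
    exact absurd hxy (not_lt.2 this)
  have t₂anti : StrictAntiOn t₂ (Set.Icc (F 0) (F θt)) := by
    intro x hx y hy hxy
    obtain ⟨hx1, hx2⟩ := ht₂' x hx
    obtain ⟨hy1, hy2⟩ := ht₂' y hy
    by_contra h
    push_neg at h
    have := hdec.antitoneOn hx1 hy1 h
    rw [hx2, hy2] at this
    exact absurd hxy (not_lt.2 this)
  -- strict monotonicity of Ψ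
  have Ψmono : StrictMonoOn (fun lam => (t₁ lam - t₂ lam) / 2 + π)
      (Set.Icc (F 0) (F θt)) := by
    intro x hx y hy hxy
    have h1 := t₁mono hx hy hxy
    have h2 := t₂anti hx hy hxy
    simp only
    linarith
  -- surjectivity of t₁ onto [0, θt]
  have surj₁ : Set.SurjOn t₁ (Set.Icc (F 0) (F θt)) (Set.Icc (t₁ (F 0)) (t₁ (F θt))) := by
    rw [h1L, h1M]
    intro θ hθ
    rcases eq_or_lt_of_le hθ.1 with h1 | h1
    · exact ⟨F 0, hLmem, by rw [h1L, h1]⟩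
    · rcases eq_or_lt_of_le hθ.2 with h2 | h2
      · exact ⟨F θt, hMmem, by rw [h1M, h2]⟩
      · have hθicc : θ ∈ Set.Icc 0 θt := ⟨le_of_lt h1, le_of_lt h2⟩
        have hlam : F θ ∈ Set.Ioo (F 0) (F θt) :=
          ⟨hinc h0mem hθicc h1, hinc hθicc hθtmem h2⟩
        obtain ⟨hm, hF⟩ := ht₁ (F θ) hlam
        refine ⟨F θ, ⟨le_of_lt hlam.1, le_of_lt hlam.2⟩, ?_⟩
        exact hinc.injOn ⟨le_of_lt hm.1, le_of_lt hm.2⟩ hθicc hF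
  -- surjectivity of -t₂ onto [-(2π), -θt]
  have surj₂ : Set.SurjOn (fun lam => -t₂ lam) (Set.Icc (F 0) (F θt))
      (Set.Icc (-t₂ (F 0)) (-t₂ (F θt))) := by
    rw [h2L, h2M]
    intro y hy
    have hθ1 : θt ≤ -y := le_neg_of_le_neg hy.2
    have hθ2 : -y ≤ 2 * π := neg_le_of_neg_le hy.1
    rcases eq_or_lt_of_le hθ1 with h1 | h1
    · refine ⟨F θt, hMmem, ?_⟩
      simp only [h2M]
      linarith
    · rcases eq_or_lt_of_le hθ2 with h2 | h2
      · refine ⟨F 0, hLmem, ?_⟩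
        simp only [h2L]
        linarith
      · have hθicc : -y ∈ Set.Icc θt (2 * π) := ⟨le_of_lt h1, le_of_lt h2⟩
        have hlam : F (-y) ∈ Set.Ioo (F 0) (F θt) := by
          constructor
          · rw [hper]; exact hdec hθicc h2πmem h2
          · exact hdec hθtmem' hθicc h1
        obtain ⟨hm, hF⟩ := ht₂ (F (-y)) hlam
        refine ⟨F (-y), ⟨le_of_lt hlam.1, le_of_lt hlam.2⟩, ?_⟩
        have : t₂ (F (-y)) = -y :=
          hdec.injOn ⟨le_of_lt hm.1, le_of_lt hm.2⟩ hθicc hF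
        simp only [this, neg_neg]
  -- continuity
  have negt₂mono : StrictMonoOn (fun lam => -t₂ lam) (Set.Icc (F 0) (F θt)) := by
    intro x hx y hy hxy
    simp only [neg_lt_neg_iff]
    exact t₂anti hx hy hxy
  have hc1 : ContinuousOn t₁ (Set.Icc (F 0) (F θt)) :=
    continuousOn_of_strictMonoOn_surjOn (le_of_lt hLM) t₁mono surj₁
  have hc2' : ContinuousOn (fun lam => -t₂ lam) (Set.Icc (F 0) (F θt)) :=
    continuousOn_of_strictMonoOn_surjOn (le_of_lt hLM) negt₂mono surj₂
  have hc2 : ContinuousOn t₂ (Set.Icc (F 0) (F θt)) := by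
    have := hc2'.neg
    convert this using 1
    funext x
    simp
  have Ψcont : ContinuousOn (fun lam => (t₁ lam - t₂ lam) / 2 + π)
      (Set.Icc (F 0) (F θt)) :=
    (((hc1.sub hc2).div_const 2).add continuousOn_const)
  -- endpoint values of Ψ
  have hΨL : (t₁ (F 0) - t₂ (F 0)) / 2 + π = 0 := by rw [h1L, h2L]; ring
  have hΨM : (t₁ (F θt) - t₂ (F θt)) / 2 + π = π := by rw [h1M, h2M]; ring
  refine ⟨Ψmono, Ψcont, ?_, Ψmono.injOn, ?_⟩
  · -- MapsTo
    intro lam hlam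
    constructor
    · have := Ψmono.monotoneOn hLmem hlam hlam.1
      rw [hΨL] at this
      exact this
    · have := Ψmono.monotoneOn hlam hMmem hlam.2
      rw [hΨM] at this
      exact this
  · -- SurjOn via IVT
    have := intermediate_value_Icc (le_of_lt hLM) Ψcont
    simp only [hΨL, hΨM] at this
    exact this
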